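/- Let E: S(A) → S(B) and D: S(B) → S(A) be quantum channels where dim(A) = M and dim(B) = R. Then the average recovery fidelity over Haar-random pure states satisfies ∫ Tr((D∘E)(|ϑ⟩⟨ϑ|) · |ϑ⟩⟨ϑ|) dϑ ≤ (RM + R)/(M(M+1)) ≤ R/M. -/

import Mathlib

open Matrix ComplexOrder

/-- The positive semidefinite square root of a matrix (junk value `0` off
positive semidefinite matrices). -/
noncomputable def msqrt {n : Type*} [Fintype n] [DecidableEq n] (A : Matrix n n ℂ) :
    Matrix n n ℂ :=
  letI := Classical.propDecidable
  if h : A.PosSemidef then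
    (h.1.eigenvectorUnitary : Matrix n n ℂ) *
      diagonal ((↑) ∘ (fun i => (h.1.eigenvalues i).sqrt)) *
      (star h.1.eigenvectorUnitary : Matrix n n ℂ)
  else 0

/-- The trace norm `‖X‖₁ = Tr √(XᴴX)`. -/
noncomputable def traceNorm {n : Type*} [Fintype n] [DecidableEq n] (X : Matrix n n ℂ) : ℝ :=
  (msqrt (Xᴴ * X)).trace.re

/-- The (squared) fidelity `F(ρ,σ) = ‖√ρ √σ‖₁²`. -/
noncomputable def fidelity {n : Type*} [Fintype n] [DecidableEq n] (ρ σ : Matrix n n ℂ) : ℝ :=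
  traceNorm (msqrt ρ * msqrt σ) ^ 2

/-- The trace distance `td(ρ,σ) = ‖ρ - σ‖₁ / 2`. -/
noncomputable def traceDist {n : Type*} [Fintype n] [DecidableEq n] (ρ σ : Matrix n n ℂ) : ℝ :=
  traceNorm (ρ - σ) / 2

/-- The outer product `|u⟩⟨v|`. -/
noncomputable def outer {n : Type*} (u v : n → ℂ) : Matrix n n ℂ :=
  Matrix.of fun i j => u i * (starRingEnd ℂ) (v j)

/-- Partial trace over the first tensor factor. -/
noncomputable def ptrFst {α β : Type*} [Fintype α] (M : Matrix (α × β) (α × β) ℂ) : Matrix β β ℂ :=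
  Matrix.of fun b b' => ∑ a, M (a, b) (a, b')

/-- Partial trace over the second tensor factor. -/
noncomputable def ptrSnd {α β : Type*} [Fintype β] (M : Matrix (α × β) (α × β) ℂ) : Matrix α α ℂ :=
  Matrix.of fun a a' => ∑ b, M (a, b) (a', b)

/-- A map on matrices is a quantum channel (CPTP) iff it admits a finite Kraus
representation `E(ρ) = Σᵢ Kᵢ ρ Kᵢᴴ` with `Σᵢ Kᵢᴴ Kᵢ = 1`. -/
def IsCPTP {α β : Type*} [Fintype α] [Fintype β] [DecidableEq α] [DecidableEq β]
    (E : Matrix α α ℂ → Matrix β β ℂ) : Prop :=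
  ∃ (m : ℕ) (K : Fin m → Matrix β α ℂ),
    (∀ ρ, E ρ = ∑ i, K i * ρ * (K i)ᴴ) ∧ ∑ i, (K i)ᴴ * K i = 1

/-! ### Auxiliary lemmas -/

/-- Squared Frobenius norm. -/
noncomputable def frob {m n : Type*} [Fintype m] [Fintype n] (X : Matrix m n ℂ) : ℝ :=
  ∑ a, ∑ b, ‖X a b‖ ^ 2

lemma star_mul_self_eq (z : ℂ) : star z * z = (‖z‖ ^ 2 : ℝ) := by
  rw [mul_comm]
  simp [Complex.star_def, Complex.mul_conj, Complex.normSq_eq_norm_sq]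

lemma mul_star_self_eq (z : ℂ) : z * star z = (‖z‖ ^ 2 : ℝ) := by
  rw [mul_comm]; exact star_mul_self_eq z

lemma trace_eq_frob {m n : Type*} [Fintype m] [Fintype n] [DecidableEq n] (X : Matrix m n ℂ) :
    (Xᴴ * X).trace = (frob X : ℂ) := by
  simp only [Matrix.trace, Matrix.diag_apply, Matrix.mul_apply, Matrix.conjTranspose_apply, frob]
  rw [Finset.sum_comm]
  push_cast
  simp_rw [star_mul_self_eq]
  push_cast
  rfl

lemma sum_frob {ι m n : Type*} [Fintype ι] [Fintype m] [Fintype n] [DecidableEq n]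
    (K : ι → Matrix m n ℂ) (h : ∑ i, (K i)ᴴ * K i = 1) :
    ∑ i, frob (K i) = Fintype.card n := by
  have h2 := congrArg Matrix.trace h
  rw [Matrix.trace_sum, Matrix.trace_one] at h2
  simp_rw [trace_eq_frob] at h2
  exact_mod_cast h2

lemma kraus_comp {ι κ na nb nc : Type*} [Fintype ι] [Fintype κ] [Fintype na] [Fintype nb]
    [Fintype nc] [DecidableEq na] [DecidableEq nb]
    (K : ι → Matrix nb na ℂ) (L : κ → Matrix nc nb ℂ)
    (hK : ∑ i, (K i)ᴴ * K i = 1) (hL : ∑ j, (L j)ᴴ * L j = 1) :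
    ∑ t : ι × κ, ((L t.2 * K t.1)ᴴ * (L t.2 * K t.1)) = 1 := by
  rw [Fintype.sum_prod_type]
  have h : ∀ i, ∑ j, ((L j * K i)ᴴ * (L j * K i)) = (K i)ᴴ * K i := by
    intro i
    have h1 : ∀ j, (L j * K i)ᴴ * (L j * K i) = (K i)ᴴ * ((L j)ᴴ * L j) * K i := by
      intro j; rw [conjTranspose_mul]; simp only [Matrix.mul_assoc]
    simp_rw [h1]
    rw [← Matrix.sum_mul, ← Matrix.mul_sum, hL, Matrix.mul_one]
  simp_rw [h]; exact hK

lemma cs_complex {ι : Type*} [Fintype ι] (u v : ι → ℂ) :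
    ‖∑ x, u x * v x‖ ^ 2 ≤ (∑ x, ‖u x‖ ^ 2) * (∑ x, ‖v x‖ ^ 2) := by
  classical
  let a : EuclideanSpace ℂ ι := WithLp.toLp 2 (fun x => star (u x))
  let b : EuclideanSpace ℂ ι := WithLp.toLp 2 v
  have h1 : inner ℂ a b = ∑ x, u x * v x := by
    simp [a, b, PiLp.inner_apply, RCLike.inner_apply, Complex.star_def, Complex.conj_conj, mul_comm]
  have h2 := norm_inner_le_norm (𝕜 := ℂ) a b
  have ha : ‖a‖ ^ 2 = ∑ x, ‖u x‖ ^ 2 := by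
    rw [EuclideanSpace.norm_eq, Real.sq_sqrt (by positivity)]
    simp [a]
  have hb : ‖b‖ ^ 2 = ∑ x, ‖v x‖ ^ 2 := by
    rw [EuclideanSpace.norm_eq, Real.sq_sqrt (by positivity)]
  calc ‖∑ x, u x * v x‖ ^ 2 = ‖inner ℂ a b‖ ^ 2 := by rw [h1]
    _ ≤ (‖a‖ * ‖b‖) ^ 2 := by
        apply pow_le_pow_left₀ (norm_nonneg _) h2
    _ = (∑ x, ‖u x‖ ^ 2) * (∑ x, ‖v x‖ ^ 2) := by rw [mul_pow, ha, hb]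

lemma sum_perm4 {n : Type*} [Fintype n] (F : n → n → n → n → ℂ) :
    ∑ a, ∑ d, ∑ c, ∑ b, F a d c b = ∑ b, ∑ d, ∑ c, ∑ a, F a d c b :=
  calc ∑ a, ∑ d, ∑ c, ∑ b, F a d c b
      = ∑ d, ∑ a, ∑ c, ∑ b, F a d c b := Finset.sum_comm
    _ = ∑ d, ∑ c, ∑ a, ∑ b, F a d c b :=
        Finset.sum_congr rfl fun _ _ => Finset.sum_comm
    _ = ∑ d, ∑ c, ∑ b, ∑ a, F a d c b :=
        Finset.sum_congr rfl fun _ _ => Finset.sum_congr rfl fun _ _ => Finset.sum_comm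
    _ = ∑ d, ∑ b, ∑ c, ∑ a, F a d c b :=
        Finset.sum_congr rfl fun _ _ => Finset.sum_comm
    _ = ∑ b, ∑ d, ∑ c, ∑ a, F a d c b := Finset.sum_comm

lemma trace_quad {n : Type*} [Fintype n] (B ρ : Matrix n n ℂ) :
    (B * ρ * Bᴴ * ρ).trace
      = ∑ p : n × n, ∑ q : n × n,
          (B q.2 p.1 * star (B p.2 q.1)) * (ρ p.1 q.1 * ρ p.2 q.2) := by
  simp only [Matrix.trace, Matrix.diag_apply, Matrix.mul_apply, Matrix.conjTranspose_apply,
    Finset.sum_mul, Finset.mul_sum, Fintype.sum_prod_type]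
  rw [sum_perm4 (F := fun a d c b => B a b * ρ b c * star (B d c) * ρ d a)]
  apply Finset.sum_congr rfl; intro b _
  apply Finset.sum_congr rfl; intro d _
  apply Finset.sum_congr rfl; intro c _
  apply Finset.sum_congr rfl; intro a _
  ring

open MeasureTheory Kronecker in
/-- Average recovery fidelity bound.  Let `Enc : S(A) → S(B)` and
`Dec : S(B) → S(A)` be quantum channels with `dim A = M`, `dim B = R`, and let
`μ` be the Haar measure on pure states of `A` (characterized by being supported
on unit vectors with second moment `∫ |ϑ⟩⟨ϑ|^{⊗2} dμ = (id + S)/(M(M+1))`, `S`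
the swap).  Then
`∫ Tr((Dec∘Enc)(|ϑ⟩⟨ϑ|)·|ϑ⟩⟨ϑ|) dμ ≤ (RM + R)/(M(M+1)) ≤ R/M`. -/
theorem haar_average_recovery_bound (M R : ℕ) (hM : 0 < M) (hR : 0 < R)
    (Enc : Matrix (Fin M) (Fin M) ℂ → Matrix (Fin R) (Fin R) ℂ)
    (Dec : Matrix (Fin R) (Fin R) ℂ → Matrix (Fin M) (Fin M) ℂ)
    (hEnc : IsCPTP Enc) (hDec : IsCPTP Dec)
    (μ : Measure (Fin M → ℂ)) [IsProbabilityMeasure μ]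
    (hunit : ∀ᵐ ϑ ∂μ, ∑ x, ‖ϑ x‖ ^ 2 = 1)
    (hmom : ∀ p q : Fin M × Fin M,
      (∫ ϑ, ((outer ϑ ϑ) ⊗ₖ (outer ϑ ϑ)) p q ∂μ) =
        ((((M : ℂ) * ((M : ℂ) + 1))⁻¹ •
          ((1 : Matrix (Fin M × Fin M) (Fin M × Fin M) ℂ) +
            Matrix.of (fun p q : Fin M × Fin M =>
              if p.1 = q.2 ∧ p.2 = q.1 then (1 : ℂ) else 0))) p q)) :
    (∫ ϑ, ((Dec (Enc (outer ϑ ϑ)) * outer ϑ ϑ).trace).re ∂μ) ≤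
        ((R : ℝ) * M + R) / (M * (M + 1)) ∧
      ((R : ℝ) * M + R) / (M * (M + 1)) ≤ (R : ℝ) / M := by
  classical
  obtain ⟨mE, K, hKdef, hK⟩ := hEnc
  obtain ⟨mD, L, hLdef, hL⟩ := hDec
  set A : Fin mE × Fin mD → Matrix (Fin M) (Fin M) ℂ := fun t => L t.2 * K t.1 with hA
  set coef : Fin M × Fin M → Fin M × Fin M → ℂ :=
    fun p q => ∑ t, A t q.2 p.1 * star (A t p.2 q.1) with hcoef
  set c : ℂ := ((M : ℂ) * ((M : ℂ) + 1))⁻¹ with hc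
  set W : Matrix (Fin M × Fin M) (Fin M × Fin M) ℂ :=
    Matrix.of (fun p q : Fin M × Fin M =>
      if p.1 = q.2 ∧ p.2 = q.1 then (1 : ℂ) else 0) with hW
  -- combined Kraus representation
  have hcomp : ∀ ρ, Dec (Enc ρ) = ∑ t : Fin mE × Fin mD, A t * ρ * (A t)ᴴ := by
    intro ρ
    have step : ∀ j, L j * (∑ i, K i * ρ * (K i)ᴴ) * (L j)ᴴ
        = ∑ i, A (i, j) * ρ * (A (i, j))ᴴ := by
      intro j
      rw [Matrix.mul_sum, Matrix.sum_mul]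
      apply Finset.sum_congr rfl; intro i _
      simp only [hA, conjTranspose_mul, Matrix.mul_assoc]
    calc Dec (Enc ρ) = ∑ j, L j * (∑ i, K i * ρ * (K i)ᴴ) * (L j)ᴴ := by
          rw [hLdef, hKdef]
      _ = ∑ j, ∑ i, A (i, j) * ρ * (A (i, j))ᴴ :=
          Finset.sum_congr rfl fun j _ => step j
      _ = ∑ i, ∑ j, A (i, j) * ρ * (A (i, j))ᴴ := Finset.sum_comm
      _ = ∑ t : Fin mE × Fin mD, A t * ρ * (A t)ᴴ :=
          (Fintype.sum_prod_type (f := fun t : Fin mE × Fin mD => A t * ρ * (A t)ᴴ)).symm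
  -- pointwise expansion
  have hpt : ∀ ϑ : Fin M → ℂ, (Dec (Enc (outer ϑ ϑ)) * outer ϑ ϑ).trace
      = ∑ p : Fin M × Fin M, ∑ q : Fin M × Fin M,
          coef p q * ((outer ϑ ϑ) ⊗ₖ (outer ϑ ϑ)) p q := by
    intro ϑ
    rw [hcomp, Matrix.sum_mul, Matrix.trace_sum]
    simp_rw [trace_quad]
    calc ∑ t, ∑ p : Fin M × Fin M, ∑ q : Fin M × Fin M,
          (A t q.2 p.1 * star (A t p.2 q.1)) * (outer ϑ ϑ p.1 q.1 * outer ϑ ϑ p.2 q.2)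
        = ∑ p : Fin M × Fin M, ∑ t, ∑ q : Fin M × Fin M,
          (A t q.2 p.1 * star (A t p.2 q.1)) * (outer ϑ ϑ p.1 q.1 * outer ϑ ϑ p.2 q.2) :=
          Finset.sum_comm
      _ = ∑ p : Fin M × Fin M, ∑ q : Fin M × Fin M, ∑ t,
          (A t q.2 p.1 * star (A t p.2 q.1)) * (outer ϑ ϑ p.1 q.1 * outer ϑ ϑ p.2 q.2) :=
          Finset.sum_congr rfl fun _ _ => Finset.sum_comm
      _ = ∑ p : Fin M × Fin M, ∑ q : Fin M × Fin M,
          coef p q * ((outer ϑ ϑ) ⊗ₖ (outer ϑ ϑ)) p q := by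
          apply Finset.sum_congr rfl; intro p _
          apply Finset.sum_congr rfl; intro q _
          rw [hcoef]
          simp only [Matrix.kroneckerMap_apply, Finset.sum_mul]
  -- integrability
  have hg_int : ∀ p q : Fin M × Fin M,
      Integrable (fun ϑ => ((outer ϑ ϑ) ⊗ₖ (outer ϑ ϑ)) p q) μ := by
    intro p q
    apply Integrable.mono' (integrable_const (1 : ℝ))
    · apply Measurable.aestronglyMeasurable
      simp only [outer, Matrix.kroneckerMap_apply, Matrix.of_apply]
      exact (((measurable_pi_apply p.1).mul
        (continuous_star.measurable.comp (measurable_pi_apply q.1))).mul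
        ((measurable_pi_apply p.2).mul
          (continuous_star.measurable.comp (measurable_pi_apply q.2))))
    · filter_upwards [hunit] with ϑ hϑ
      have hx : ∀ x, ‖ϑ x‖ ≤ 1 := by
        intro x
        have h1 : ‖ϑ x‖ ^ 2 ≤ 1 := by
          rw [← hϑ]
          exact Finset.single_le_sum (f := fun x => ‖ϑ x‖ ^ 2)
            (fun i _ => by positivity) (Finset.mem_univ x)
        nlinarith [norm_nonneg (ϑ x)]
      simp only [outer, Matrix.kroneckerMap_apply, Matrix.of_apply, norm_mul,
        RCLike.norm_conj]
      have h4 : ∀ x y : Fin M, ‖ϑ x‖ * ‖ϑ y‖ ≤ 1 :=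
        fun x y => mul_le_one₀ (hx x) (norm_nonneg _) (hx y)
      exact mul_le_one₀ (h4 _ _) (by positivity) (h4 _ _)
  have hFint : Integrable (fun ϑ => (Dec (Enc (outer ϑ ϑ)) * outer ϑ ϑ).trace) μ := by
    have : (fun ϑ => (Dec (Enc (outer ϑ ϑ)) * outer ϑ ϑ).trace)
        = fun ϑ => ∑ p : Fin M × Fin M, ∑ q : Fin M × Fin M,
            coef p q * ((outer ϑ ϑ) ⊗ₖ (outer ϑ ϑ)) p q := funext hpt
    rw [this]
    apply integrable_finset_sum; intro p _
    apply integrable_finset_sum; intro q _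
    exact (hg_int p q).const_mul _
  -- compute the integral
  have hZ : (∫ ϑ, (Dec (Enc (outer ϑ ϑ)) * outer ϑ ϑ).trace ∂μ)
      = ∑ p : Fin M × Fin M, ∑ q : Fin M × Fin M, coef p q * ((c • (1 + W)) p q) := by
    rw [show (fun ϑ => (Dec (Enc (outer ϑ ϑ)) * outer ϑ ϑ).trace)
        = fun ϑ => ∑ p : Fin M × Fin M, ∑ q : Fin M × Fin M,
            coef p q * ((outer ϑ ϑ) ⊗ₖ (outer ϑ ϑ)) p q from funext hpt]
    rw [integral_finset_sum _ (fun p _ => integrable_finset_sum _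
      (fun q _ => (hg_int p q).const_mul _))]
    apply Finset.sum_congr rfl; intro p _
    rw [integral_finset_sum _ (fun q _ => (hg_int p q).const_mul _)]
    apply Finset.sum_congr rfl; intro q _
    rw [MeasureTheory.integral_const_mul, hmom p q]
  -- evaluate the double sum
  set ΓR : ℝ := ∑ t, ‖(A t).trace‖ ^ 2 with hΓR
  have hfrA : ∑ t, frob (A t) = (M : ℝ) := by
    have := sum_frob A (kraus_comp K L hK hL)
    simpa using this
  have hT1 : ∑ p : Fin M × Fin M, coef p p = (M : ℂ) := by
    rw [hcoef]
    rw [Finset.sum_comm]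
    have h1 : ∀ t, ∑ p : Fin M × Fin M, A t p.2 p.1 * star (A t p.2 p.1)
        = (frob (A t) : ℂ) := by
      intro t
      rw [Fintype.sum_prod_type, Finset.sum_comm]
      simp_rw [mul_star_self_eq]
      rw [frob]
      push_cast
      rfl
    simp_rw [h1]
    rw [← Complex.ofReal_sum, hfrA]
    simp
  have hT2 : ∑ p : Fin M × Fin M, coef p (p.2, p.1) = (ΓR : ℂ) := by
    rw [hcoef]
    rw [Finset.sum_comm]
    have h1 : ∀ t, ∑ p : Fin M × Fin M, A t p.1 p.1 * star (A t p.2 p.2)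
        = (‖(A t).trace‖ ^ 2 : ℝ) := by
      intro t
      rw [Fintype.sum_prod_type]
      simp_rw [← Finset.mul_sum]
      rw [← Finset.sum_mul, ← star_sum]
      rw [show ∑ b, A t b b = (A t).trace from rfl]
      exact mul_star_self_eq _
    simp_rw [h1]
    rw [hΓR]
    push_cast
    rfl
  have hkey : ∀ p : Fin M × Fin M, ∑ q : Fin M × Fin M, coef p q * ((c • (1 + W)) p q)
      = c * (coef p p + coef p (p.2, p.1)) := by
    intro p
    have hterm : ∀ q : Fin M × Fin M, coef p q * ((c • (1 + W)) p q)
        = c * (coef p q * (if p = q then 1 else 0)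
              + coef p q * (if q = (p.2, p.1) then 1 else 0)) := by
      intro q
      have hWq : W p q = (if q = (p.2, p.1) then (1 : ℂ) else 0) := by
        rw [hW]
        simp only [Matrix.of_apply]
        by_cases h : q = (p.2, p.1)
        · subst h; simp
        · rw [if_neg h, if_neg]
          rintro ⟨h1, h2⟩
          exact h (Prod.ext h2.symm h1.symm)
      rw [Matrix.smul_apply, Matrix.add_apply, Matrix.one_apply, hWq, smul_eq_mul]
      ring
    rw [Finset.sum_congr rfl (fun q _ => hterm q), ← Finset.mul_sum]
    congr 1
    rw [Finset.sum_add_distrib]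
    congr 1
    · simp [Finset.sum_ite_eq]
    · simp [Finset.sum_ite_eq']
  have hZ2 : (∫ ϑ, (Dec (Enc (outer ϑ ϑ)) * outer ϑ ϑ).trace ∂μ)
      = c * ((M : ℂ) + (ΓR : ℂ)) := by
    rw [hZ, Finset.sum_congr rfl (fun p _ => hkey p), ← Finset.mul_sum,
      Finset.sum_add_distrib, hT1, hT2]
  -- the real part
  have hre : (∫ ϑ, ((Dec (Enc (outer ϑ ϑ)) * outer ϑ ϑ).trace).re ∂μ)
      = ((M : ℝ) + ΓR) / ((M : ℝ) * ((M : ℝ) + 1)) := by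
    have h1 : (∫ ϑ, ((Dec (Enc (outer ϑ ϑ)) * outer ϑ ϑ).trace).re ∂μ)
        = (∫ ϑ, (Dec (Enc (outer ϑ ϑ)) * outer ϑ ϑ).trace ∂μ).re := by
      rw [← RCLike.re_to_complex, ← integral_re hFint]
      rfl
    rw [h1, hZ2, hc]
    rw [show ((M : ℂ) * ((M : ℂ) + 1))⁻¹ * ((M : ℂ) + (ΓR : ℂ))
        = ((((M : ℝ) + ΓR) / ((M : ℝ) * ((M : ℝ) + 1)) : ℝ) : ℂ) by
      push_cast; ring]
    exact Complex.ofReal_re _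
  -- Γ bounds
  have hΓ0 : 0 ≤ ΓR := Finset.sum_nonneg fun t _ => by positivity
  have hG1 : ΓR ≤ (R : ℝ) * M := by
    have hb1 : ∀ t : Fin mE × Fin mD, ‖(A t).trace‖ ^ 2 ≤ frob (L t.2) * frob (K t.1) := by
      intro t
      have htr : (A t).trace = ∑ x : Fin M × Fin R, L t.2 x.1 x.2 * K t.1 x.2 x.1 := by
        rw [hA]
        simp only [Matrix.trace, Matrix.diag_apply, Matrix.mul_apply]
        rw [Fintype.sum_prod_type (f := fun x : Fin M × Fin R => L t.2 x.1 x.2 * K t.1 x.2 x.1)]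
      rw [htr]
      refine le_trans (cs_complex (fun x : Fin M × Fin R => L t.2 x.1 x.2)
        (fun x : Fin M × Fin R => K t.1 x.2 x.1)) (le_of_eq ?_)
      congr 1
      · rw [frob, ← Fintype.sum_prod_type (f := fun x : Fin M × Fin R => ‖L t.2 x.1 x.2‖ ^ 2)]
      · rw [frob, Fintype.sum_prod_type (f := fun x : Fin M × Fin R => ‖K t.1 x.2 x.1‖ ^ 2),
          Finset.sum_comm]
    calc ΓR ≤ ∑ t : Fin mE × Fin mD, frob (L t.2) * frob (K t.1) :=
          Finset.sum_le_sum fun t _ => hb1 t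
      _ = (∑ i, frob (K i)) * (∑ j, frob (L j)) := by
          rw [Finset.sum_mul_sum, Fintype.sum_prod_type]
          apply Finset.sum_congr rfl; intro i _
          apply Finset.sum_congr rfl; intro j _
          ring
      _ = (M : ℝ) * (R : ℝ) := by
          have h1 := sum_frob K hK
          have h2 := sum_frob L hL
          simp only [Fintype.card_fin] at h1 h2
          rw [h1, h2]
      _ = (R : ℝ) * M := by ring
  have hG2 : ΓR ≤ (R : ℝ) * R := by
    have hfr2 : ∑ t : Fin mE × Fin mD, frob (K t.1 * L t.2) = (R : ℝ) := by
      have := sum_frob (fun t : Fin mD × Fin mE => K t.2 * L t.1) (kraus_comp L K hL hK)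
      simp only [Fintype.card_fin] at this
      rw [← this]
      exact Fintype.sum_equiv (Equiv.prodComm _ _) _ _ (fun t => rfl)
    have hb2 : ∀ t : Fin mE × Fin mD, ‖(A t).trace‖ ^ 2 ≤ (R : ℝ) * frob (K t.1 * L t.2) := by
      intro t
      have htrc : (A t).trace = (K t.1 * L t.2).trace := Matrix.trace_mul_comm _ _
      rw [htrc]
      have h := cs_complex (fun _ : Fin R => (1 : ℂ)) (fun x => (K t.1 * L t.2) x x)
      simp only [one_mul, norm_one, one_pow, Finset.sum_const, Finset.card_univ,
        Fintype.card_fin, nsmul_eq_mul, mul_one] at h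
      refine le_trans h ?_
      apply mul_le_mul_of_nonneg_left _ (by positivity)
      rw [frob]
      apply Finset.sum_le_sum
      intro a _
      exact Finset.single_le_sum (f := fun b => ‖(K t.1 * L t.2) a b‖ ^ 2)
        (fun b _ => by positivity) (Finset.mem_univ a)
    calc ΓR ≤ ∑ t : Fin mE × Fin mD, (R : ℝ) * frob (K t.1 * L t.2) :=
          Finset.sum_le_sum fun t _ => hb2 t
      _ = (R : ℝ) * ∑ t : Fin mE × Fin mD, frob (K t.1 * L t.2) := by
          rw [Finset.mul_sum]
      _ = (R : ℝ) * R := by rw [hfr2]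
  -- final inequalities
  have hMpos : (0 : ℝ) < M := by exact_mod_cast hM
  have hRpos : (0 : ℝ) < R := by exact_mod_cast hR
  have hM1 : (1 : ℝ) ≤ M := by exact_mod_cast hM
  have hR1 : (1 : ℝ) ≤ R := by exact_mod_cast hR
  constructor
  · rw [hre]
    have hnum : (M : ℝ) + ΓR ≤ (R : ℝ) * M + R := by
      rcases le_total (R : ℝ) (M : ℝ) with h | h
      · nlinarith [hG2]
      · nlinarith [hG1]
    gcongr
  · apply le_of_eq
    rw [div_eq_div_iff (by positivity) (ne_of_gt hMpos)]
    ring
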